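/- Let n ≥ 3. Let F be the free group on generators x_1, …, x_n, γ_2, …, γ_n, and write a^b = b^{-1}ab. Set z = x_1 · x_2^{γ_2} · x_3^{γ_3} ⋯ x_n^{γ_n} and ζ = x_1 x_2 ⋯ x_n in F. Let G be the quotient of F by the normal closure of the 2n−1 relators: z ζ^{-1}; the words x_j γ_j z γ_j^{-1} x_j^{-1} ζ^{-1} for 2 ≤ j ≤ n; and the commutators [z, x_j^{γ_j}] for 2 ≤ j ≤ n. Let Π be the genus-(n−1) surface group, i.e., the quotient of the free group on g_1, …, g_{2n−2} by the normal closure of the single relator [g_1, g_2][g_3, g_4] ⋯ [g_{2n−3}, g_{2n−2}], where [a,b] = aba^{-1}b^{-1}. Then G is isomorphic to the direct product ℤ × Π. -/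

import Mathlib

namespace BoundaryManifoldStmt8

section Aux
variable {G : Type*} [Group G]

def pp (f : ℕ → G) : ℕ → G
  | 0 => 1
  | k + 1 => pp f k * f k

def qq (f : ℕ → G) : ℕ → G
  | 0 => 1
  | k + 1 => f k * qq f k

@[simp] lemma pp_zero (f : ℕ → G) : pp f 0 = 1 := rfl
@[simp] lemma pp_succ (f : ℕ → G) (k : ℕ) : pp f (k + 1) = pp f k * f k := rfl
@[simp] lemma qq_zero (f : ℕ → G) : qq f 0 = 1 := rfl
@[simp] lemma qq_succ (f : ℕ → G) (k : ℕ) : qq f (k + 1) = f k * qq f k := rfl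

lemma ofFn_prod_eq_pp (f : ℕ → G) (k : ℕ) :
    (List.ofFn (fun i : Fin k => f i.1)).prod = pp f k := by
  induction k with
  | zero => simp
  | succ k ih =>
    rw [List.ofFn_succ', List.prod_concat]
    simpa using congrArg (· * f k) ih

lemma pp_shift (f : ℕ → G) (k : ℕ) :
    pp f (k + 1) = f 0 * pp (fun t => f (t + 1)) k := by
  induction k with
  | zero => simp
  | succ k ih => rw [pp_succ, ih]; simp [mul_assoc]

end Aux

/-- The relators of the presentation of the fundamental group of the boundary manifold of
a near-pencil of `n+1` lines: generators `x_1, …, x_n` (indexed by `Fin n`, with `x_{i+1}`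
at index `i`) and `γ_2, …, γ_n` (indexed by `Fin (n-1)`, with `γ_{j+2}` at index `j`).
With `z = x_1 x_2^{γ_2} ⋯ x_n^{γ_n}` (where `a^b = b⁻¹ a b`) and `ζ = x_1 x_2 ⋯ x_n`,
the relators are `z ζ⁻¹`, the words `x_j γ_j z γ_j⁻¹ x_j⁻¹ ζ⁻¹` for `2 ≤ j ≤ n`, and
the commutators `[z, x_j^{γ_j}] = a b a⁻¹ b⁻¹` for `2 ≤ j ≤ n`. -/
def npRels (n : ℕ) (hn : 3 ≤ n) : Set (FreeGroup (Fin n ⊕ Fin (n - 1))) :=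
  let x : Fin n → FreeGroup (Fin n ⊕ Fin (n - 1)) := fun i => FreeGroup.of (Sum.inl i)
  let γ : Fin (n - 1) → FreeGroup (Fin n ⊕ Fin (n - 1)) := fun j => FreeGroup.of (Sum.inr j)
  -- `x_{j}` for `2 ≤ j ≤ n`, at index `j : Fin (n-1)`
  let x' : Fin (n - 1) → FreeGroup (Fin n ⊕ Fin (n - 1)) := fun j =>
    x ⟨j.1 + 1, by have := j.isLt; omega⟩
  -- `z = x_1 · x_2^{γ_2} ⋯ x_n^{γ_n}`
  let z : FreeGroup (Fin n ⊕ Fin (n - 1)) :=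
    x ⟨0, by omega⟩ * (List.ofFn (fun j : Fin (n - 1) => (γ j)⁻¹ * x' j * γ j)).prod
  let ζ : FreeGroup (Fin n ⊕ Fin (n - 1)) := (List.ofFn x).prod
  {z * ζ⁻¹}
    ∪ (Set.range fun j : Fin (n - 1) => x' j * γ j * z * (γ j)⁻¹ * (x' j)⁻¹ * ζ⁻¹)
    ∪ (Set.range fun j : Fin (n - 1) =>
        z * ((γ j)⁻¹ * x' j * γ j) * z⁻¹ * ((γ j)⁻¹ * x' j * γ j)⁻¹)

/-- The single relator `[g_1,g_2][g_3,g_4] ⋯ [g_{2n-3},g_{2n-2}]` of the genus-`(n-1)`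
surface group, on generators `g_1, …, g_{2n-2}` (with `g_{i+1}` at index `i : Fin (2n-2)`),
where `[a,b] = a b a⁻¹ b⁻¹`. -/
def surfaceRels (n : ℕ) : Set (FreeGroup (Fin (2 * n - 2))) :=
  let g : Fin (2 * n - 2) → FreeGroup (Fin (2 * n - 2)) := FreeGroup.of
  { (List.ofFn (fun t : Fin (n - 1) =>
      g ⟨2 * t.1, by have := t.isLt; omega⟩ * g ⟨2 * t.1 + 1, by have := t.isLt; omega⟩ *
        (g ⟨2 * t.1, by have := t.isLt; omega⟩)⁻¹ *
        (g ⟨2 * t.1 + 1, by have := t.isLt; omega⟩)⁻¹)).prod }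

section Main

variable {n : ℕ} {G : Type*} [Group G]

/-- `XX f i = x_{i+1}` image, junk `1` for `i ≥ n`. -/
def XX (n : ℕ) (f : Fin n ⊕ Fin (n - 1) → G) (i : ℕ) : G :=
  if h : i < n then f (.inl ⟨i, h⟩) else 1

def GG (n : ℕ) (f : Fin n ⊕ Fin (n - 1) → G) (j : ℕ) : G :=
  if h : j < n - 1 then f (.inr ⟨j, h⟩) else 1

def WW (n : ℕ) (f : Fin n ⊕ Fin (n - 1) → G) : ℕ → G := pp (fun t => XX n f (t + 1))

def CC (n : ℕ) (f : Fin n ⊕ Fin (n - 1) → G) : ℕ → G :=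
  pp (fun t => (GG n f t)⁻¹ * XX n f (t + 1) * GG n f t)

variable (f : Fin n ⊕ Fin (n - 1) → G)

lemma lift_zeta (hn : 3 ≤ n) :
    FreeGroup.lift f (List.ofFn (fun i : Fin n => FreeGroup.of (Sum.inl i))).prod
      = XX n f 0 * WW n f (n - 1) := by
  rw [map_list_prod, List.map_ofFn]
  have h1 : ((FreeGroup.lift f) ∘ fun i : Fin n => FreeGroup.of (Sum.inl i))
      = fun i : Fin n => XX n f i.1 := by
    funext i
    simp [XX, i.isLt, Fin.eta]
  rw [h1, ofFn_prod_eq_pp]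
  have h2 : n - 1 + 1 = n := by omega
  calc pp (XX n f) n = pp (XX n f) (n - 1 + 1) := by rw [h2]
    _ = XX n f 0 * WW n f (n - 1) := pp_shift _ _

lemma lift_z (hn : 3 ≤ n) :
    FreeGroup.lift f
      (FreeGroup.of (Sum.inl (⟨0, by omega⟩ : Fin n)) *
        (List.ofFn (fun j : Fin (n - 1) =>
          (FreeGroup.of (Sum.inr j))⁻¹ *
            FreeGroup.of (Sum.inl (⟨j.1 + 1, by have := j.isLt; omega⟩ : Fin n)) *
            FreeGroup.of (Sum.inr j))).prod)
      = XX n f 0 * CC n f (n - 1) := by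
  rw [map_mul, map_list_prod, List.map_ofFn]
  congr 1
  · simp [XX, show 0 < n by omega]
  · have h1 : ((FreeGroup.lift f) ∘ fun j : Fin (n - 1) =>
        (FreeGroup.of (Sum.inr j))⁻¹ *
          FreeGroup.of (Sum.inl (⟨j.1 + 1, by have := j.isLt; omega⟩ : Fin n)) *
          FreeGroup.of (Sum.inr j))
        = fun j : Fin (n - 1) =>
            (GG n f j.1)⁻¹ * XX n f (j.1 + 1) * GG n f j.1 := by
      funext j
      have hj := j.isLt
      simp [XX, GG, hj, show j.1 + 1 < n by omega, Fin.eta]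
    rw [h1, ofFn_prod_eq_pp (fun t => (GG n f t)⁻¹ * XX n f (t + 1) * GG n f t)]
    rfl

end Main

end BoundaryManifoldStmt8

namespace BoundaryManifoldStmt8

section Main2
variable {n : ℕ} {G : Type*} [Group G]

/-- Generic criterion for a map on generators to kill all relators of `npRels`. -/
lemma lift_npRels_eq_one (hn : 3 ≤ n) (f : Fin n ⊕ Fin (n - 1) → G)
    (h1 : XX n f 0 * CC n f (n - 1) = XX n f 0 * WW n f (n - 1))
    (h2 : ∀ j : Fin (n - 1),
      XX n f (j.1 + 1) * GG n f j.1 * (XX n f 0 * CC n f (n - 1)) * (GG n f j.1)⁻¹ *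
        (XX n f (j.1 + 1))⁻¹ * (XX n f 0 * WW n f (n - 1))⁻¹ = 1)
    (h3 : ∀ j : Fin (n - 1),
      Commute (XX n f 0 * CC n f (n - 1)) ((GG n f j.1)⁻¹ * XX n f (j.1 + 1) * GG n f j.1)) :
    ∀ r ∈ npRels n hn, FreeGroup.lift f r = 1 := by
  intro r hr
  simp only [npRels, Set.mem_union, Set.mem_singleton_iff, Set.mem_range] at hr
  have hx' : ∀ j : Fin (n - 1),
      FreeGroup.lift f (FreeGroup.of (Sum.inl (⟨j.1 + 1, by have := j.isLt; omega⟩ : Fin n)))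
        = XX n f (j.1 + 1) := by
    intro j
    have hj := j.isLt
    simp [XX, show j.1 + 1 < n by omega]
  have hγ : ∀ j : Fin (n - 1), FreeGroup.lift f (FreeGroup.of (Sum.inr j)) = GG n f j.1 := by
    intro j
    have hj := j.isLt
    simp [GG, hj, Fin.eta]
  obtain (rfl | ⟨j, rfl⟩) | ⟨j, rfl⟩ := hr
  · rw [map_mul, map_inv, lift_z _ hn, lift_zeta _ hn, h1, mul_inv_cancel]
  · simp only [map_mul, map_inv, lift_z _ hn, lift_zeta _ hn, hx', hγ]
    exact h2 j
  · simp only [map_mul, map_inv, lift_z _ hn, hx', hγ]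
    rw [(h3 j).eq]
    group
end Main2
end BoundaryManifoldStmt8

namespace BoundaryManifoldStmt8
def xw' (m : ℕ) (j : Fin (m - 1)) : FreeGroup (Fin m ⊕ Fin (m - 1)) :=
  FreeGroup.of (Sum.inl (⟨j.1 + 1, by have := j.isLt; omega⟩ : Fin m))

def γw (m : ℕ) (j : Fin (m - 1)) : FreeGroup (Fin m ⊕ Fin (m - 1)) := FreeGroup.of (Sum.inr j)

def ζw (m : ℕ) : FreeGroup (Fin m ⊕ Fin (m - 1)) :=
  (List.ofFn (fun i : Fin m => FreeGroup.of (Sum.inl i))).prod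

def zw (m : ℕ) (hm : 3 ≤ m) : FreeGroup (Fin m ⊕ Fin (m - 1)) :=
  FreeGroup.of (Sum.inl (⟨0, by omega⟩ : Fin m)) *
    (List.ofFn (fun j : Fin (m - 1) =>
      (FreeGroup.of (Sum.inr j))⁻¹ *
        FreeGroup.of (Sum.inl (⟨j.1 + 1, by have := j.isLt; omega⟩ : Fin m)) *
        FreeGroup.of (Sum.inr j))).prod

section Words
variable (n : ℕ) (hn : 3 ≤ n)


lemma mem1 : zw n hn * (ζw n)⁻¹ ∈ npRels n hn := by
  simp only [npRels, Set.mem_union, Set.mem_singleton_iff]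
  exact Or.inl (Or.inl rfl)

lemma mem2 (j : Fin (n - 1)) :
    xw' n j * γw n j * zw n hn * (γw n j)⁻¹ * (xw' n j)⁻¹ * (ζw n)⁻¹ ∈ npRels n hn := by
  simp only [npRels, Set.mem_union, Set.mem_range]
  exact Or.inl (Or.inr ⟨j, rfl⟩)

lemma mem3 (j : Fin (n - 1)) :
    zw n hn * ((γw n j)⁻¹ * xw' n j * γw n j) * (zw n hn)⁻¹ *
      ((γw n j)⁻¹ * xw' n j * γw n j)⁻¹ ∈ npRels n hn := by
  simp only [npRels, Set.mem_union, Set.mem_range]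
  exact Or.inr ⟨j, rfl⟩

end Words

section Lifts
variable {n : ℕ} {G : Type*} [Group G] (f : Fin n ⊕ Fin (n - 1) → G)

lemma lift_zw (hn : 3 ≤ n) : FreeGroup.lift f (zw n hn) = XX n f 0 * CC n f (n - 1) :=
  lift_z f hn

lemma lift_ζw (hn : 3 ≤ n) : FreeGroup.lift f (ζw n) = XX n f 0 * WW n f (n - 1) :=
  lift_zeta f hn

lemma lift_xw' (j : Fin (n - 1)) : FreeGroup.lift f (xw' n j) = XX n f (j.1 + 1) := by
  have hj := j.isLt
  simp [xw', XX, show j.1 + 1 < n by omega]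

lemma lift_γw (j : Fin (n - 1)) : FreeGroup.lift f (γw n j) = GG n f j.1 := by
  have hj := j.isLt
  simp [γw, GG, hj, Fin.eta]

end Lifts
end BoundaryManifoldStmt8

namespace BoundaryManifoldStmt8
section GSide
variable (n : ℕ) (hn : 3 ≤ n)

local notation "og" => (PresentedGroup.of : Fin n ⊕ Fin (n - 1) → PresentedGroup (npRels n hn))

lemma lift_og : FreeGroup.lift og = PresentedGroup.mk (npRels n hn) := by
  ext a
  simp only [FreeGroup.lift_apply_of]
  rfl

lemma relOne {r : FreeGroup (Fin n ⊕ Fin (n - 1))} (hr : r ∈ npRels n hn) :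
    PresentedGroup.mk (npRels n hn) r = 1 :=
  (QuotientGroup.eq_one_iff r).mpr (Subgroup.subset_normalClosure hr)

lemma E1 : XX n og 0 * CC n og (n - 1) = XX n og 0 * WW n og (n - 1) := by
  have h := relOne n hn (mem1 n hn)
  rw [← lift_og, map_mul, map_inv, lift_zw _ hn, lift_ζw _ hn, mul_inv_eq_one] at h
  exact h

lemma E2 (j : Fin (n - 1)) :
    XX n og (j.1 + 1) * GG n og j.1 * (XX n og 0 * CC n og (n - 1)) * (GG n og j.1)⁻¹ *
      (XX n og (j.1 + 1))⁻¹ = XX n og 0 * WW n og (n - 1) := by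
  have h := relOne n hn (mem2 n hn j)
  rw [← lift_og] at h
  simp only [map_mul, map_inv, lift_zw _ hn, lift_ζw _ hn, lift_xw', lift_γw,
    mul_inv_eq_one] at h
  exact h

lemma E3 (j : Fin (n - 1)) :
    Commute (XX n og 0 * CC n og (n - 1))
      ((GG n og j.1)⁻¹ * XX n og (j.1 + 1) * GG n og j.1) := by
  have h := relOne n hn (mem3 n hn j)
  rw [← lift_og] at h
  simp only [map_mul, map_inv, lift_zw _ hn, lift_xw', lift_γw] at h
  exact commutatorElement_eq_one_iff_commute.mp h

end GSide
end BoundaryManifoldStmt8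

namespace BoundaryManifoldStmt8
section GSide2
variable (n : ℕ) (hn : 3 ≤ n)

local notation "og" => (PresentedGroup.of : Fin n ⊕ Fin (n - 1) → PresentedGroup (npRels n hn))
local notation "ζg" => XX n og 0 * WW n og (n - 1)

lemma cd (j : Fin (n - 1)) : Commute ζg (XX n og (j.1 + 1) * GG n og j.1) := by
  have h2 := E2 n hn j
  rw [E1 n hn] at h2
  refine Commute.symm ?_
  show _ * _ = _ * _
  conv_rhs => rw [← h2]
  group

lemma cγ (j : Fin (n - 1)) : Commute ζg (GG n og j.1) := by
  have hc := E3 n hn j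
  rw [E1 n hn] at hc
  have hG : GG n og j.1 = (XX n og (j.1 + 1) * GG n og j.1) *
      ((GG n og j.1)⁻¹ * XX n og (j.1 + 1) * GG n og j.1)⁻¹ := by group
  rw [hG]
  exact (cd n hn j).mul_right hc.inv_right

lemma cx (j : Fin (n - 1)) : Commute ζg (XX n og (j.1 + 1)) := by
  have hX : XX n og (j.1 + 1) = (XX n og (j.1 + 1) * GG n og j.1) * (GG n og j.1)⁻¹ := by group
  rw [hX]
  exact (cd n hn j).mul_right (cγ n hn j).inv_right

lemma cW : ∀ k, k ≤ n - 1 → Commute ζg (WW n og k) := by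
  intro k
  induction k with
  | zero => intro _; exact Commute.one_right _
  | succ k ih =>
    intro hk
    have h1 : Commute ζg (XX n og (k + 1)) := cx n hn ⟨k, by omega⟩
    exact (ih (by omega)).mul_right h1

lemma zeta_comm_gen (a : Fin n ⊕ Fin (n - 1)) : Commute ζg (PresentedGroup.of a) := by
  rcases a with i | j
  · rcases hi : i.1 with _ | t
    · have hX0 : PresentedGroup.of (Sum.inl i) = XX n og 0 := by
        have : i = (⟨0, by omega⟩ : Fin n) := Fin.ext (by simp [hi])
        rw [this]
        simp [XX, show (0 : ℕ) < n by omega]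
      rw [hX0]
      have h := (Commute.refl ζg).mul_right (cW n hn (n - 1) le_rfl).inv_right
      have e : ζg * (WW n og (n - 1))⁻¹ = XX n og 0 := by group
      rwa [e] at h
    · have ht : t < n - 1 := by have := i.isLt; omega
      have hX : PresentedGroup.of (Sum.inl i) = XX n og (t + 1) := by
        have : i = (⟨t + 1, by omega⟩ : Fin n) := Fin.ext (by simp [hi])
        rw [this]
        simp [XX, show t + 1 < n by omega]
      rw [hX]
      exact cx n hn ⟨t, ht⟩
  · have hG : PresentedGroup.of (Sum.inr j) = GG n og j.1 := by
      simp [GG, j.isLt, Fin.eta]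
    rw [hG]
    exact cγ n hn j

lemma zeta_central (y : PresentedGroup (npRels n hn)) : Commute ζg y := by
  induction y using PresentedGroup.induction_on with
  | H w =>
    induction w using FreeGroup.induction_on with
    | C1 => exact Commute.one_right _
    | of a => exact zeta_comm_gen n hn a
    | inv_of a h => rw [map_inv]; exact Commute.inv_right h
    | mul u v hu hv => rw [map_mul]; exact Commute.mul_right hu hv

end GSide2
end BoundaryManifoldStmt8

namespace BoundaryManifoldStmt8
section WWCC
variable {n : ℕ} {G : Type*} [Group G] (f : Fin n ⊕ Fin (n - 1) → G)

@[simp] lemma WW_zero : WW n f 0 = 1 := rfl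
@[simp] lemma WW_succ (k : ℕ) : WW n f (k + 1) = WW n f k * XX n f (k + 1) := rfl
@[simp] lemma CC_zero : CC n f 0 = 1 := rfl
@[simp] lemma CC_succ (k : ℕ) :
    CC n f (k + 1) = CC n f k * ((GG n f k)⁻¹ * XX n f (k + 1) * GG n f k) := rfl

end WWCC

section PhiSide
variable (n : ℕ) (hn : 3 ≤ n)

local notation "og" => (PresentedGroup.of : Fin n ⊕ Fin (n - 1) → PresentedGroup (npRels n hn))
local notation "ζg" => XX n og 0 * WW n og (n - 1)

/-- The images of the surface-group generators in `G`. -/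
def fφ : Fin (2 * n - 2) → PresentedGroup (npRels n hn) := fun m =>
  if m.1 % 2 = 0 then
    WW n og (m.1 / 2) * (GG n og (m.1 / 2))⁻¹ * (WW n og (m.1 / 2))⁻¹
  else
    WW n og (m.1 / 2) * XX n og (m.1 / 2 + 1) * (WW n og (m.1 / 2))⁻¹

lemma fφ_even (t : ℕ) (h : 2 * t < 2 * n - 2) :
    fφ n hn ⟨2 * t, h⟩ = WW n og t * (GG n og t)⁻¹ * (WW n og t)⁻¹ := by
  simp only [fφ]
  rw [if_pos (by omega : 2 * t % 2 = 0), show 2 * t / 2 = t from by omega]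

lemma fφ_odd (t : ℕ) (h : 2 * t + 1 < 2 * n - 2) :
    fφ n hn ⟨2 * t + 1, h⟩ = WW n og t * XX n og (t + 1) * (WW n og t)⁻¹ := by
  simp only [fφ]
  rw [if_neg (by omega : ¬(2 * t + 1) % 2 = 0), show (2 * t + 1) / 2 = t from by omega]

/-- The commutator images, as a function of a natural number index. -/
def Dg (t : ℕ) : PresentedGroup (npRels n hn) :=
  (WW n og t * (GG n og t)⁻¹ * (WW n og t)⁻¹) * (WW n og t * XX n og (t + 1) * (WW n og t)⁻¹) *
    (WW n og t * (GG n og t)⁻¹ * (WW n og t)⁻¹)⁻¹ *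
    (WW n og t * XX n og (t + 1) * (WW n og t)⁻¹)⁻¹

lemma Dg_telescope (k : ℕ) : pp (Dg n hn) k = CC n og k * (WW n og k)⁻¹ := by
  induction k with
  | zero => simp
  | succ k ih =>
    rw [pp_succ, ih, Dg, CC_succ, WW_succ]
    group

lemma hφrel : ∀ r ∈ surfaceRels n, FreeGroup.lift (fφ n hn) r = 1 := by
  intro r hr
  simp only [surfaceRels, Set.mem_singleton_iff] at hr
  subst hr
  rw [map_list_prod, List.map_ofFn]
  have hfun : (FreeGroup.lift (fφ n hn)) ∘ (fun t : Fin (n - 1) =>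
      FreeGroup.of (⟨2 * t.1, by have := t.isLt; omega⟩ : Fin (2 * n - 2)) *
        FreeGroup.of (⟨2 * t.1 + 1, by have := t.isLt; omega⟩ : Fin (2 * n - 2)) *
        (FreeGroup.of (⟨2 * t.1, by have := t.isLt; omega⟩ : Fin (2 * n - 2)))⁻¹ *
        (FreeGroup.of (⟨2 * t.1 + 1, by have := t.isLt; omega⟩ : Fin (2 * n - 2)))⁻¹)
      = fun t : Fin (n - 1) => Dg n hn t.1 := by
    funext t
    have ht := t.isLt
    simp only [Function.comp_apply, map_mul, map_inv, FreeGroup.lift_apply_of,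
      fφ_even n hn t.1 (by omega), fφ_odd n hn t.1 (by omega), Dg]
  rw [hfun, ofFn_prod_eq_pp, Dg_telescope]
  have hE := E1 n hn
  have : CC n og (n - 1) = WW n og (n - 1) := mul_left_cancel hE
  rw [this, mul_inv_cancel]

/-- The homomorphism `Π → G`. -/
def phiP : PresentedGroup (surfaceRels n) →* PresentedGroup (npRels n hn) :=
  PresentedGroup.toGroup (hφrel n hn)

/-- The homomorphism `ℤ × Π → G`. -/
def φ : (Multiplicative ℤ × PresentedGroup (surfaceRels n)) →* PresentedGroup (npRels n hn) :=
  (zpowersHom _ ζg).noncommCoprod (phiP n hn)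
    (fun a p => (zeta_central n hn ((phiP n hn) p)).zpow_left a.toAdd)

end PhiSide
end BoundaryManifoldStmt8

namespace BoundaryManifoldStmt8
section PsiSide
variable (n : ℕ) (hn : 3 ≤ n)

/-- `a`-generators of the surface group (ℕ-indexed, junk value `1` out of range). -/
def Ag (t : ℕ) : PresentedGroup (surfaceRels n) :=
  if h : 2 * t < 2 * n - 2 then PresentedGroup.of ⟨2 * t, h⟩ else 1

/-- `b`-generators of the surface group (ℕ-indexed, junk value `1` out of range). -/
def Bg (t : ℕ) : PresentedGroup (surfaceRels n) :=
  if h : 2 * t + 1 < 2 * n - 2 then PresentedGroup.of ⟨2 * t + 1, h⟩ else 1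

def Qg : ℕ → PresentedGroup (surfaceRels n) := qq (Bg n)

def Rg : ℕ → PresentedGroup (surfaceRels n) :=
  pp (fun t => Ag n t * Bg n t * (Ag n t)⁻¹ * (Bg n t)⁻¹)

@[simp] lemma Qg_zero : Qg n 0 = 1 := rfl
@[simp] lemma Qg_succ (k : ℕ) : Qg n (k + 1) = Bg n k * Qg n k := rfl
@[simp] lemma Rg_zero : Rg n 0 = 1 := rfl
@[simp] lemma Rg_succ (k : ℕ) :
    Rg n (k + 1) = Rg n k * (Ag n k * Bg n k * (Ag n k)⁻¹ * (Bg n k)⁻¹) := rfl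

lemma Rg_eq_one : Rg n (n - 1) = 1 := by
  have hm : (List.ofFn (fun t : Fin (n - 1) =>
      FreeGroup.of (⟨2 * t.1, by have := t.isLt; omega⟩ : Fin (2 * n - 2)) *
        FreeGroup.of (⟨2 * t.1 + 1, by have := t.isLt; omega⟩ : Fin (2 * n - 2)) *
        (FreeGroup.of (⟨2 * t.1, by have := t.isLt; omega⟩ : Fin (2 * n - 2)))⁻¹ *
        (FreeGroup.of (⟨2 * t.1 + 1, by have := t.isLt; omega⟩ : Fin (2 * n - 2)))⁻¹)).prod
      ∈ surfaceRels n := by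
    simp only [surfaceRels, Set.mem_singleton_iff]
  have h1 : (PresentedGroup.mk (surfaceRels n)) (List.ofFn (fun t : Fin (n - 1) =>
      FreeGroup.of (⟨2 * t.1, by have := t.isLt; omega⟩ : Fin (2 * n - 2)) *
        FreeGroup.of (⟨2 * t.1 + 1, by have := t.isLt; omega⟩ : Fin (2 * n - 2)) *
        (FreeGroup.of (⟨2 * t.1, by have := t.isLt; omega⟩ : Fin (2 * n - 2)))⁻¹ *
        (FreeGroup.of (⟨2 * t.1 + 1, by have := t.isLt; omega⟩ : Fin (2 * n - 2)))⁻¹)).prod = 1 :=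
    (QuotientGroup.eq_one_iff _).mpr (Subgroup.subset_normalClosure hm)
  have h2 : (PresentedGroup.mk (surfaceRels n)) (List.ofFn (fun t : Fin (n - 1) =>
      FreeGroup.of (⟨2 * t.1, by have := t.isLt; omega⟩ : Fin (2 * n - 2)) *
        FreeGroup.of (⟨2 * t.1 + 1, by have := t.isLt; omega⟩ : Fin (2 * n - 2)) *
        (FreeGroup.of (⟨2 * t.1, by have := t.isLt; omega⟩ : Fin (2 * n - 2)))⁻¹ *
        (FreeGroup.of (⟨2 * t.1 + 1, by have := t.isLt; omega⟩ : Fin (2 * n - 2)))⁻¹)).prod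
      = Rg n (n - 1) := by
    rw [map_list_prod, List.map_ofFn]
    have hfun : (PresentedGroup.mk (surfaceRels n)) ∘ (fun t : Fin (n - 1) =>
        FreeGroup.of (⟨2 * t.1, by have := t.isLt; omega⟩ : Fin (2 * n - 2)) *
          FreeGroup.of (⟨2 * t.1 + 1, by have := t.isLt; omega⟩ : Fin (2 * n - 2)) *
          (FreeGroup.of (⟨2 * t.1, by have := t.isLt; omega⟩ : Fin (2 * n - 2)))⁻¹ *
          (FreeGroup.of (⟨2 * t.1 + 1, by have := t.isLt; omega⟩ : Fin (2 * n - 2)))⁻¹)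
        = fun t : Fin (n - 1) =>
            Ag n t.1 * Bg n t.1 * (Ag n t.1)⁻¹ * (Bg n t.1)⁻¹ := by
      funext t
      have ht := t.isLt
      simp only [Function.comp_apply, map_mul, map_inv, Ag, Bg,
        dif_pos (show 2 * t.1 < 2 * n - 2 by omega),
        dif_pos (show 2 * t.1 + 1 < 2 * n - 2 by omega)]
      rfl
    rw [hfun]
    exact ofFn_prod_eq_pp (fun t => Ag n t * Bg n t * (Ag n t)⁻¹ * (Bg n t)⁻¹) (n - 1)
  rw [← h2]
  exact h1

/-- The images of the `npRels` generators in `ℤ × Π`. -/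
def fψ : Fin n ⊕ Fin (n - 1) →
    Multiplicative ℤ × PresentedGroup (surfaceRels n) := fun a =>
  match a with
  | .inl i =>
    match i.1 with
    | 0 => (Multiplicative.ofAdd (1 : ℤ), (Qg n (n - 1))⁻¹)
    | t + 1 => (1, (Qg n t)⁻¹ * Bg n t * Qg n t)
  | .inr j => (1, (Qg n j.1)⁻¹ * (Ag n j.1)⁻¹ * Qg n j.1)

lemma XXψ0 (hn : 3 ≤ n) :
    XX n (fψ n) 0 = (Multiplicative.ofAdd (1 : ℤ), (Qg n (n - 1))⁻¹) := by
  rw [XX, dif_pos (show 0 < n by omega)]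
  rfl

lemma XXψs (t : ℕ) (h : t + 1 < n) :
    XX n (fψ n) (t + 1) = (1, (Qg n t)⁻¹ * Bg n t * Qg n t) := by
  rw [XX, dif_pos h]
  rfl

lemma GGψ (t : ℕ) (h : t < n - 1) :
    GG n (fψ n) t = (1, (Qg n t)⁻¹ * (Ag n t)⁻¹ * Qg n t) := by
  rw [GG, dif_pos h]
  rfl

lemma WWψ : ∀ k, k ≤ n - 1 → WW n (fψ n) k = (1, Qg n k) := by
  intro k
  induction k with
  | zero => intro _; rfl
  | succ k ih =>
    intro hk
    rw [WW_succ, ih (by omega), XXψs n k (by omega)]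
    simp only [Prod.mk_mul_mk, Qg_succ, Prod.mk.injEq]
    constructor
    · simp
    · group

lemma CCψ : ∀ k, k ≤ n - 1 → CC n (fψ n) k = (1, Rg n k * Qg n k) := by
  intro k
  induction k with
  | zero => intro _; simp; rfl
  | succ k ih =>
    intro hk
    rw [CC_succ, ih (by omega), XXψs n k (by omega), GGψ n k (by omega)]
    simp only [Prod.inv_mk, Prod.mk_mul_mk, Qg_succ, Rg_succ, Prod.mk.injEq]
    constructor
    · simp
    · group

lemma zψ (hn : 3 ≤ n) : XX n (fψ n) 0 * CC n (fψ n) (n - 1) = (Multiplicative.ofAdd (1 : ℤ), 1) := by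
  rw [XXψ0 n hn, CCψ n (n - 1) le_rfl, Rg_eq_one]
  simp only [Prod.mk_mul_mk, Prod.mk.injEq]
  constructor
  · simp
  · group

lemma ζψ (hn : 3 ≤ n) : XX n (fψ n) 0 * WW n (fψ n) (n - 1) = (Multiplicative.ofAdd (1 : ℤ), 1) := by
  rw [XXψ0 n hn, WWψ n (n - 1) le_rfl]
  simp only [Prod.mk_mul_mk, Prod.mk.injEq]
  constructor
  · simp
  · group

lemma tcentral (y : Multiplicative ℤ × PresentedGroup (surfaceRels n)) :
    Commute ((Multiplicative.ofAdd (1 : ℤ), 1) :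
      Multiplicative ℤ × PresentedGroup (surfaceRels n)) y := by
  show _ = _
  refine Prod.ext ?_ ?_
  · simpa using mul_comm (Multiplicative.ofAdd (1 : ℤ)) y.1
  · simp

lemma hψrel : ∀ r ∈ npRels n hn, FreeGroup.lift (fψ n) r = 1 := by
  refine lift_npRels_eq_one hn (fψ n) ?_ ?_ ?_
  · rw [zψ n hn, ζψ n hn]
  · intro j
    rw [zψ n hn, ζψ n hn]
    rw [← (tcentral n (XX n (fψ n) (j.1 + 1) * GG n (fψ n) j.1)).eq]
    group
  · intro j
    rw [zψ n hn]
    exact tcentral n _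

/-- The homomorphism `G → ℤ × Π`. -/
def ψ : PresentedGroup (npRels n hn) →*
    Multiplicative ℤ × PresentedGroup (surfaceRels n) :=
  PresentedGroup.toGroup (hψrel n hn)

end PsiSide
end BoundaryManifoldStmt8

namespace BoundaryManifoldStmt8
section Comp
variable (n : ℕ) (hn : 3 ≤ n)

local notation "og" => (PresentedGroup.of : Fin n ⊕ Fin (n - 1) → PresentedGroup (npRels n hn))
local notation "ζg" => XX n og 0 * WW n og (n - 1)

lemma ψ_of (a : Fin n ⊕ Fin (n - 1)) : ψ n hn (PresentedGroup.of a) = fψ n a :=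
  PresentedGroup.toGroup.of _

lemma phiP_of (m : Fin (2 * n - 2)) : phiP n hn (PresentedGroup.of m) = fφ n hn m :=
  PresentedGroup.toGroup.of _

lemma φ_apply (a : Multiplicative ℤ) (p : PresentedGroup (surfaceRels n)) :
    φ n hn (a, p) = ζg ^ a.toAdd * phiP n hn p := rfl

lemma phiP_B (t : ℕ) (h : t < n - 1) :
    phiP n hn (Bg n t) = WW n og t * XX n og (t + 1) * (WW n og t)⁻¹ := by
  rw [Bg, dif_pos (show 2 * t + 1 < 2 * n - 2 by omega), phiP_of, fφ_odd n hn t]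

lemma phiP_A (t : ℕ) (h : t < n - 1) :
    phiP n hn (Ag n t) = WW n og t * (GG n og t)⁻¹ * (WW n og t)⁻¹ := by
  rw [Ag, dif_pos (show 2 * t < 2 * n - 2 by omega), phiP_of, fφ_even n hn t]

lemma phiP_Q : ∀ k, k ≤ n - 1 → phiP n hn (Qg n k) = WW n og k := by
  intro k
  induction k with
  | zero => intro _; simp [Qg_zero]
  | succ k ih =>
    intro hk
    rw [Qg_succ, map_mul, ih (by omega), phiP_B n hn k (by omega), WW_succ]
    group

lemma XXg0 : XX n og 0 = PresentedGroup.of (Sum.inl (⟨0, by omega⟩ : Fin n)) := by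
  rw [XX, dif_pos (show 0 < n by omega)]

lemma XXgs (t : ℕ) (h : t + 1 < n) :
    XX n og (t + 1) = PresentedGroup.of (Sum.inl (⟨t + 1, h⟩ : Fin n)) := by
  rw [XX, dif_pos h]

lemma GGg (t : ℕ) (h : t < n - 1) :
    GG n og t = PresentedGroup.of (Sum.inr (⟨t, h⟩ : Fin (n - 1))) := by
  rw [GG, dif_pos h]

lemma ψ_W : ∀ k, k ≤ n - 1 → ψ n hn (WW n og k) = (1, Qg n k) := by
  intro k
  induction k with
  | zero => intro _; simp [WW_zero]; rfl
  | succ k ih =>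
    intro hk
    rw [WW_succ, map_mul, ih (by omega), XXgs n hn k (by omega), ψ_of]
    show (1, Qg n k) * (1, (Qg n k)⁻¹ * Bg n k * Qg n k) = _
    simp only [Prod.mk_mul_mk, Qg_succ, Prod.mk.injEq]
    constructor
    · simp
    · group

lemma ψ_ζg : ψ n hn ζg = (Multiplicative.ofAdd (1 : ℤ), 1) := by
  rw [map_mul, ψ_W n hn (n - 1) le_rfl, XXg0 n hn, ψ_of]
  show ((Multiplicative.ofAdd (1 : ℤ), (Qg n (n - 1))⁻¹) : _) * _ = _
  simp only [Prod.mk_mul_mk, Prod.mk.injEq]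
  constructor
  · simp
  · group

lemma left_comp (a : Fin n ⊕ Fin (n - 1)) :
    φ n hn (ψ n hn (PresentedGroup.of a)) = PresentedGroup.of a := by
  rw [ψ_of]
  rcases a with ⟨v, hv⟩ | j
  · rcases v with _ | t
    · show φ n hn (Multiplicative.ofAdd (1 : ℤ), (Qg n (n - 1))⁻¹) = _
      rw [φ_apply, map_inv, phiP_Q n hn (n - 1) le_rfl]
      have : (ζg : PresentedGroup (npRels n hn)) ^ ((Multiplicative.ofAdd (1 : ℤ)).toAdd)
          = ζg := zpow_one _
      rw [this, ← XXg0 n hn]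
      group
    · have ht : t < n - 1 := by omega
      show φ n hn (1, (Qg n t)⁻¹ * Bg n t * Qg n t) = _
      rw [φ_apply]
      have h0 : (ζg : PresentedGroup (npRels n hn)) ^ ((1 : Multiplicative ℤ).toAdd) = 1 :=
        zpow_zero _
      rw [h0, one_mul, map_mul, map_mul, map_inv, phiP_Q n hn t (by omega),
        phiP_B n hn t ht, ← XXgs n hn t (by omega)]
      group
  · show φ n hn (1, (Qg n j.1)⁻¹ * (Ag n j.1)⁻¹ * Qg n j.1) = _
    rw [φ_apply]
    have h0 : (ζg : PresentedGroup (npRels n hn)) ^ ((1 : Multiplicative ℤ).toAdd) = 1 :=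
      zpow_zero _
    rw [h0, one_mul, map_mul, map_mul, map_inv, map_inv, phiP_Q n hn j.1 (by omega),
      phiP_A n hn j.1 j.isLt, ← GGg n hn j.1 j.isLt]
    group

lemma right_comp_gen (m : Fin (2 * n - 2)) :
    ψ n hn (phiP n hn (PresentedGroup.of m)) = (1, PresentedGroup.of m) := by
  rw [phiP_of]
  rcases m with ⟨v, hvlt⟩
  obtain ⟨t, rfl | rfl⟩ : ∃ t, v = 2 * t ∨ v = 2 * t + 1 := ⟨v / 2, by omega⟩
  · have ht' : t < n - 1 := by omega
    rw [fφ_even n hn t, map_mul, map_mul, map_inv, map_inv, ψ_W n hn t (by omega),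
      GGg n hn t ht', ψ_of]
    show (1, Qg n t) * (1, (Qg n t)⁻¹ * (Ag n t)⁻¹ * Qg n t)⁻¹ * (1, Qg n t)⁻¹ = _
    have hA : Ag n t = PresentedGroup.of (⟨2 * t, by omega⟩ : Fin (2 * n - 2)) := by
      rw [Ag, dif_pos (show 2 * t < 2 * n - 2 by omega)]
    rw [← hA]
    simp only [Prod.inv_mk, Prod.mk_mul_mk, Prod.mk.injEq]
    constructor
    · simp
    · group
  · have ht' : t < n - 1 := by omega
    rw [fφ_odd n hn t, map_mul, map_mul, map_inv, ψ_W n hn t (by omega),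
      XXgs n hn t (by omega), ψ_of]
    show (1, Qg n t) * (1, (Qg n t)⁻¹ * Bg n t * Qg n t) * (1, Qg n t)⁻¹ = _
    have hB : Bg n t = PresentedGroup.of (⟨2 * t + 1, by omega⟩ : Fin (2 * n - 2)) := by
      rw [Bg, dif_pos (show 2 * t + 1 < 2 * n - 2 by omega)]
    rw [← hB]
    simp only [Prod.inv_mk, Prod.mk_mul_mk, Prod.mk.injEq]
    constructor
    · simp
    · group

lemma right_comp_phiP (p : PresentedGroup (surfaceRels n)) :
    ψ n hn (phiP n hn p) = (1, p) := by
  have h : (ψ n hn).comp (phiP n hn)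
      = MonoidHom.inr (Multiplicative ℤ) (PresentedGroup (surfaceRels n)) := by
    apply PresentedGroup.ext
    intro m
    simpa using right_comp_gen n hn m
  exact DFunLike.congr_fun h p

end Comp
end BoundaryManifoldStmt8

namespace BoundaryManifoldStmt8


/-- For `n ≥ 3`, the group `G` presented with generators
`x_1, …, x_n, γ_2, …, γ_n` and relators `z ζ⁻¹`, `x_j γ_j z γ_j⁻¹ x_j⁻¹ ζ⁻¹`
(`2 ≤ j ≤ n`) and `[z, x_j^{γ_j}]` (`2 ≤ j ≤ n`) — the fundamental group of the boundary
manifold of a near-pencil of `n+1` lines — is isomorphic to the direct product of `ℤ`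
with the genus-`(n−1)` surface group `Π`. -/
theorem boundary_manifold_stmt8 (n : ℕ) (hn : 3 ≤ n) :
    Nonempty
      (PresentedGroup (npRels n hn) ≃*
        (Multiplicative ℤ × PresentedGroup (surfaceRels n))) := by
  have hleft : (φ n hn).comp (ψ n hn) = MonoidHom.id _ := by
    apply PresentedGroup.ext
    intro a
    simpa using left_comp n hn a
  refine ⟨{ toFun := ψ n hn, invFun := φ n hn, left_inv := ?_, right_inv := ?_,
            map_mul' := map_mul _ }⟩
  · intro x
    simpa using DFunLike.congr_fun hleft x
  · rintro ⟨a, p⟩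
    rw [φ_apply, map_mul, map_zpow, ψ_ζg n hn, right_comp_phiP n hn p]
    have h1 : ((Multiplicative.ofAdd (1 : ℤ), 1) :
        Multiplicative ℤ × PresentedGroup (surfaceRels n)) ^ (a.toAdd) = (a, 1) := by
      refine Prod.ext ?_ ?_
      · show (Multiplicative.ofAdd (1 : ℤ)) ^ (a.toAdd) = a
        rw [← ofAdd_zsmul, smul_eq_mul, mul_one, ofAdd_toAdd]
      · show (1 : PresentedGroup (surfaceRels n)) ^ (a.toAdd) = 1
        simp
    rw [h1]
    show ((a, 1) : Multiplicative ℤ × PresentedGroup (surfaceRels n)) * (1, p) = (a, p)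
    simp

end BoundaryManifoldStmt8
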